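/- (Sandqvist's soundness and completeness for IPL) For every finite set Γ of IPL formulas and every IPL formula φ: Γ ⊢ φ in intuitionistic propositional logic if and only if Γ ⊩ φ, i.e. Γ ⊩_B φ holds for every base B. -/

import Mathlib

/-- Formulas of intuitionistic propositional logic over a denumerable
set of atoms (here: `ℕ`). -/
inductive IPLForm : Type where
  | atom : ℕ → IPLForm
  | and : IPLForm → IPLForm → IPLForm
  | or : IPLForm → IPLForm → IPLForm
  | imp : IPLForm → IPLForm → IPLForm
  | bot : IPLForm
deriving DecidableEq

/-- A (second-level) atomic rule `(Q₁ ▷ q₁, …, Qₙ ▷ qₙ) ⇒ q`;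
an axiom `⇒ q` is the case `prems = []`. -/
structure IPLRule : Type where
  prems : List (Finset ℕ × ℕ)
  concl : ℕ

/-- A base is a set of atomic rules. -/
abbrev IPLBase := Set IPLRule

/-- Derivability in a base `B`: `S ⊢_B q`. -/
inductive IPLDer (B : IPLBase) : Finset ℕ → ℕ → Prop where
  | ref {S : Finset ℕ} {q : ℕ} : q ∈ S → IPLDer B S q
  | app {S : Finset ℕ} {r : IPLRule} :
      r ∈ B → (∀ pr ∈ r.prems, IPLDer B (S ∪ pr.1) pr.2) →
      IPLDer B S r.concl

/-- Sandqvist's support relation `⊩_B φ`. -/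
def Supp : IPLForm → IPLBase → Prop
  | .atom p, B => IPLDer B ∅ p
  | .and φ ψ, B => Supp φ B ∧ Supp ψ B
  | .or φ ψ, B => ∀ C : IPLBase, B ⊆ C → ∀ p : ℕ,
      (∀ D : IPLBase, C ⊆ D → Supp φ D → IPLDer D ∅ p) →
      (∀ D : IPLBase, C ⊆ D → Supp ψ D → IPLDer D ∅ p) →
      IPLDer C ∅ p
  | .imp φ ψ, B => ∀ C : IPLBase, B ⊆ C → Supp φ C → Supp ψ C
  | .bot, B => ∀ p : ℕ, IPLDer B ∅ p

/-- Support of a formula relative to a context (finite set of formulas):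
`Γ ⊩_B φ`. -/
def SuppCtx (Γ : Finset IPLForm) (B : IPLBase) (φ : IPLForm) : Prop :=
  ∀ C : IPLBase, B ⊆ C → (∀ ψ ∈ Γ, Supp ψ C) → Supp φ C

/-- The modified support relation `⊩*_B φ`, in which the clause for `∧`
takes the form of the generalized elimination rule. -/
def Supp' : IPLForm → IPLBase → Prop
  | .atom p, B => IPLDer B ∅ p
  | .and φ ψ, B => ∀ C : IPLBase, B ⊆ C → ∀ p : ℕ,
      (∀ D : IPLBase, C ⊆ D → Supp' φ D → Supp' ψ D → IPLDer D ∅ p) →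
      IPLDer C ∅ p
  | .or φ ψ, B => ∀ C : IPLBase, B ⊆ C → ∀ p : ℕ,
      (∀ D : IPLBase, C ⊆ D → Supp' φ D → IPLDer D ∅ p) →
      (∀ D : IPLBase, C ⊆ D → Supp' ψ D → IPLDer D ∅ p) →
      IPLDer C ∅ p
  | .imp φ ψ, B => ∀ C : IPLBase, B ⊆ C → Supp' φ C → Supp' ψ C
  | .bot, B => ∀ p : ℕ, IPLDer B ∅ p

/-- Support relative to a context for the modified semantics: `Γ ⊩*_B φ`. -/
def SuppCtx' (Γ : Finset IPLForm) (B : IPLBase) (φ : IPLForm) : Prop :=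
  ∀ C : IPLBase, B ⊆ C → (∀ ψ ∈ Γ, Supp' ψ C) → Supp' φ C

/-- Gentzen's natural deduction system NJ for IPL, with finite sets as
contexts: `Γ ⊢ φ`. -/
inductive NJ : Finset IPLForm → IPLForm → Prop where
  | ax {Γ : Finset IPLForm} {φ : IPLForm} : φ ∈ Γ → NJ Γ φ
  | andI {Γ φ ψ} : NJ Γ φ → NJ Γ ψ → NJ Γ (.and φ ψ)
  | andE1 {Γ φ ψ} : NJ Γ (.and φ ψ) → NJ Γ φ
  | andE2 {Γ φ ψ} : NJ Γ (.and φ ψ) → NJ Γ ψ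
  | orI1 {Γ φ ψ} : NJ Γ φ → NJ Γ (.or φ ψ)
  | orI2 {Γ φ ψ} : NJ Γ ψ → NJ Γ (.or φ ψ)
  | orE {Γ φ ψ χ} : NJ Γ (.or φ ψ) → NJ (insert φ Γ) χ → NJ (insert ψ Γ) χ → NJ Γ χ
  | impI {Γ φ ψ} : NJ (insert φ Γ) ψ → NJ Γ (.imp φ ψ)
  | impE {Γ φ ψ} : NJ Γ (.imp φ ψ) → NJ Γ φ → NJ Γ ψ
  | botE {Γ φ} : NJ Γ .bot → NJ Γ φ

/-! ### Basic lemmas about derivability -/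

theorem IPLDer.monoBase {B C : IPLBase} (h : B ⊆ C) {S q} (d : IPLDer B S q) :
    IPLDer C S q := by
  induction d with
  | ref hq => exact .ref hq
  | app hr _ ih => exact .app (h hr) ih

theorem IPLDer.monoCtx {B : IPLBase} {S T : Finset ℕ} (h : S ⊆ T) {q}
    (d : IPLDer B S q) : IPLDer B T q := by
  induction d generalizing T with
  | ref hq => exact .ref (h hq)
  | app hr _ ih =>
    exact .app hr fun pr hpr => ih pr hpr (Finset.union_subset_union_left h)

theorem IPLDer.shift {B : IPLBase} {a : ℕ} {S q}
    (d : IPLDer (insert ⟨[], a⟩ B) S q) : IPLDer B (insert a S) q := by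
  induction d with
  | ref hq => exact .ref (Finset.mem_insert_of_mem hq)
  | app hr h ih =>
    rcases hr with hr | hr
    · cases hr
      exact .ref (Finset.mem_insert_self _ _)
    · refine .app hr fun pr hpr => ?_
      rw [Finset.insert_union]
      exact ih pr hpr

/-- Derivability in the base extended with the axiom `⇒ a`. -/
theorem IPLDer.axSelf {B : IPLBase} {a : ℕ} {S : Finset ℕ} :
    IPLDer (insert ⟨[], a⟩ B) S a := by
  exact IPLDer.app (r := ⟨[], a⟩) (Or.inl rfl) (fun pr hpr => (List.not_mem_nil hpr).elim)

/-! ### Basic lemmas about support -/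

theorem Supp.mono : ∀ (φ : IPLForm) {B C : IPLBase}, B ⊆ C → Supp φ B → Supp φ C
  | .atom p, _, _, h, hs => hs.monoBase h
  | .and φ ψ, _, _, h, hs => ⟨Supp.mono φ h hs.1, Supp.mono ψ h hs.2⟩
  | .or φ ψ, _, _, h, hs => fun D hD => hs D (h.trans hD)
  | .imp φ ψ, _, _, h, hs => fun D hD => hs D (h.trans hD)
  | .bot, _, _, h, hs => fun p => (hs p).monoBase h

theorem Supp.ofBot : ∀ (φ : IPLForm) {B : IPLBase}, (∀ p, IPLDer B ∅ p) → Supp φ B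
  | .atom p, _, h => h p
  | .and φ ψ, _, h => ⟨Supp.ofBot φ h, Supp.ofBot ψ h⟩
  | .or _ _, _, h => fun C hC p _ _ => (h p).monoBase hC
  | .imp _ ψ, _, h => fun C hC _ => Supp.ofBot ψ fun p => (h p).monoBase hC
  | .bot, _, h => h

/-- Semantic disjunction elimination. -/
theorem Supp.orE : ∀ (χ : IPLForm) {φ ψ : IPLForm} {B : IPLBase},
    Supp (.or φ ψ) B →
    (∀ C, B ⊆ C → Supp φ C → Supp χ C) →
    (∀ C, B ⊆ C → Supp ψ C → Supp χ C) → Supp χ B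
  | .atom p, φ, ψ, B, hor, h1, h2 =>
      hor B (subset_refl _) p (fun D hD hφ => h1 D hD hφ) (fun D hD hψ => h2 D hD hψ)
  | .and χ₁ χ₂, φ, ψ, B, hor, h1, h2 =>
      ⟨Supp.orE χ₁ hor (fun C hC hφ => (h1 C hC hφ).1) (fun C hC hψ => (h2 C hC hψ).1),
       Supp.orE χ₂ hor (fun C hC hφ => (h1 C hC hφ).2) (fun C hC hψ => (h2 C hC hψ).2)⟩
  | .imp χ₁ χ₂, φ, ψ, B, hor, h1, h2 => fun C hC hχ₁ =>
      Supp.orE χ₂ (Supp.mono _ hC hor)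
        (fun D hD hφ => h1 D (hC.trans hD) hφ D (subset_refl _) (Supp.mono _ hD hχ₁))
        (fun D hD hψ => h2 D (hC.trans hD) hψ D (subset_refl _) (Supp.mono _ hD hχ₁))
  | .or χ₁ χ₂, φ, ψ, B, hor, h1, h2 => fun C hC p k1 k2 =>
      hor C hC p
        (fun D hD hφ => h1 D (hC.trans hD) hφ D (subset_refl _) p
          (fun E hE => k1 E (hD.trans hE)) (fun E hE => k2 E (hD.trans hE)))
        (fun D hD hψ => h2 D (hC.trans hD) hψ D (subset_refl _) p
          (fun E hE => k1 E (hD.trans hE)) (fun E hE => k2 E (hD.trans hE)))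
  | .bot, φ, ψ, B, hor, h1, h2 => fun p =>
      hor B (subset_refl _) p (fun D hD hφ => h1 D hD hφ p) (fun D hD hψ => h2 D hD hψ p)

/-! ### Soundness -/

theorem NJ.sound {Γ : Finset IPLForm} {φ : IPLForm} (h : NJ Γ φ) :
    ∀ B : IPLBase, SuppCtx Γ B φ := by
  induction h with
  | ax hφ => exact fun B C _ hΓ => hΓ _ hφ
  | andI _ _ ih1 ih2 => exact fun B C hC hΓ => ⟨ih1 B C hC hΓ, ih2 B C hC hΓ⟩
  | andE1 _ ih => exact fun B C hC hΓ => (ih B C hC hΓ).1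
  | andE2 _ ih => exact fun B C hC hΓ => (ih B C hC hΓ).2
  | orI1 _ ih =>
    exact fun B C hC hΓ D hD p k1 _ => k1 D (subset_refl _) (ih B C hC hΓ |>.mono _ hD)
  | orI2 _ ih =>
    exact fun B C hC hΓ D hD p _ k2 => k2 D (subset_refl _) (ih B C hC hΓ |>.mono _ hD)
  | @orE Γ φ ψ χ _ _ _ ih ih1 ih2 =>
    intro B C hC hΓ
    refine Supp.orE χ (ih B C hC hΓ) ?_ ?_
    · intro D hD hφ
      exact ih1 B D (hC.trans hD) (by
        intro ξ hξ
        rcases Finset.mem_insert.1 hξ with rfl | hξ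
        · exact hφ
        · exact (hΓ ξ hξ).mono _ hD)
    · intro D hD hψ
      exact ih2 B D (hC.trans hD) (by
        intro ξ hξ
        rcases Finset.mem_insert.1 hξ with rfl | hξ
        · exact hψ
        · exact (hΓ ξ hξ).mono _ hD)
  | @impI Γ φ ψ _ ih =>
    intro B C hC hΓ D hD hφ
    exact ih B D (hC.trans hD) (by
      intro ξ hξ
      rcases Finset.mem_insert.1 hξ with rfl | hξ
      · exact hφ
      · exact (hΓ ξ hξ).mono _ hD)
  | impE _ _ ih1 ih2 =>
    exact fun B C hC hΓ => ih1 B C hC hΓ C (subset_refl _) (ih2 B C hC hΓ)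
  | @botE Γ φ _ ih =>
    exact fun B C hC hΓ => Supp.ofBot φ (ih B C hC hΓ)

/-! ### Encoding of formulas -/

def enc : IPLForm → ℕ
  | .atom p => Nat.pair 0 p
  | .and a b => Nat.pair 1 (Nat.pair (enc a) (enc b))
  | .or a b => Nat.pair 2 (Nat.pair (enc a) (enc b))
  | .imp a b => Nat.pair 3 (Nat.pair (enc a) (enc b))
  | .bot => Nat.pair 4 0

theorem enc_inj : ∀ (x y : IPLForm), enc x = enc y → x = y := by
  intro x
  induction x with
  | atom p =>
    intro y h
    cases y <;> simp only [enc, Nat.pair_eq_pair] at h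
    · rw [h.2]
    · exact absurd h.1 (by decide)
    · exact absurd h.1 (by decide)
    · exact absurd h.1 (by decide)
    · exact absurd h.1 (by decide)
  | and a b iha ihb =>
    intro y h
    cases y <;> simp only [enc, Nat.pair_eq_pair] at h
    · exact absurd h.1 (by decide)
    · rw [iha _ h.2.1, ihb _ h.2.2]
    · exact absurd h.1 (by decide)
    · exact absurd h.1 (by decide)
    · exact absurd h.1 (by decide)
  | or a b iha ihb =>
    intro y h
    cases y <;> simp only [enc, Nat.pair_eq_pair] at h
    · exact absurd h.1 (by decide)
    · exact absurd h.1 (by decide)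
    · rw [iha _ h.2.1, ihb _ h.2.2]
    · exact absurd h.1 (by decide)
    · exact absurd h.1 (by decide)
  | imp a b iha ihb =>
    intro y h
    cases y <;> simp only [enc, Nat.pair_eq_pair] at h
    · exact absurd h.1 (by decide)
    · exact absurd h.1 (by decide)
    · exact absurd h.1 (by decide)
    · rw [iha _ h.2.1, ihb _ h.2.2]
    · exact absurd h.1 (by decide)
  | bot =>
    intro y h
    cases y <;> simp only [enc, Nat.pair_eq_pair] at h
    · exact absurd h.1 (by decide)
    · exact absurd h.1 (by decide)
    · exact absurd h.1 (by decide)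
    · exact absurd h.1 (by decide)
    · rfl

/-! ### Subformulas -/

def sub : IPLForm → Finset IPLForm
  | .atom p => {.atom p}
  | .and a b => insert (.and a b) (sub a ∪ sub b)
  | .or a b => insert (.or a b) (sub a ∪ sub b)
  | .imp a b => insert (.imp a b) (sub a ∪ sub b)
  | .bot => {.bot}

theorem IPLsub_self : ∀ (φ : IPLForm), φ ∈ sub φ := by
  intro φ; cases φ <;> simp [sub]

theorem IPLsub_trans : ∀ {χ ξ : IPLForm}, ξ ∈ sub χ → sub ξ ⊆ sub χ := by
  intro χ
  induction χ with
  | atom p =>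
    intro ξ h
    simp only [sub, Finset.mem_singleton] at h
    subst h; exact subset_refl _
  | and a b iha ihb =>
    intro ξ h
    rcases Finset.mem_insert.1 h with rfl | h
    · exact subset_refl _
    · rcases Finset.mem_union.1 h with h | h
      · exact (iha h).trans (Finset.subset_union_left.trans (Finset.subset_insert _ _))
      · exact (ihb h).trans (Finset.subset_union_right.trans (Finset.subset_insert _ _))
  | or a b iha ihb =>
    intro ξ h
    rcases Finset.mem_insert.1 h with rfl | h
    · exact subset_refl _
    · rcases Finset.mem_union.1 h with h | h
      · exact (iha h).trans (Finset.subset_union_left.trans (Finset.subset_insert _ _))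
      · exact (ihb h).trans (Finset.subset_union_right.trans (Finset.subset_insert _ _))
  | imp a b iha ihb =>
    intro ξ h
    rcases Finset.mem_insert.1 h with rfl | h
    · exact subset_refl _
    · rcases Finset.mem_union.1 h with h | h
      · exact (iha h).trans (Finset.subset_union_left.trans (Finset.subset_insert _ _))
      · exact (ihb h).trans (Finset.subset_union_right.trans (Finset.subset_insert _ _))
  | bot =>
    intro ξ h
    simp only [sub, Finset.mem_singleton] at h
    subst h; exact subset_refl _

/-! ### The base associated to a finite set of formulas -/

/-- The atomic rules of Sandqvist's simulating base. -/
inductive NRule (Sf : Finset IPLForm) (fl : IPLForm → ℕ) (Γ : Finset IPLForm) :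
    IPLRule → Prop where
  | axΓ {γ} : γ ∈ Γ → NRule Sf fl Γ ⟨[], fl γ⟩
  | andI {a b} : .and a b ∈ Sf →
      NRule Sf fl Γ ⟨[(∅, fl a), (∅, fl b)], fl (.and a b)⟩
  | andE1 {a b} : .and a b ∈ Sf → NRule Sf fl Γ ⟨[(∅, fl (.and a b))], fl a⟩
  | andE2 {a b} : .and a b ∈ Sf → NRule Sf fl Γ ⟨[(∅, fl (.and a b))], fl b⟩
  | orI1 {a b} : .or a b ∈ Sf → NRule Sf fl Γ ⟨[(∅, fl a)], fl (.or a b)⟩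
  | orI2 {a b} : .or a b ∈ Sf → NRule Sf fl Γ ⟨[(∅, fl b)], fl (.or a b)⟩
  | orE {a b p} : .or a b ∈ Sf →
      NRule Sf fl Γ ⟨[(∅, fl (.or a b)), ({fl a}, p), ({fl b}, p)], p⟩
  | impI {a b} : .imp a b ∈ Sf → NRule Sf fl Γ ⟨[({fl a}, fl b)], fl (.imp a b)⟩
  | impE {a b} : .imp a b ∈ Sf →
      NRule Sf fl Γ ⟨[(∅, fl (.imp a b)), (∅, fl a)], fl b⟩
  | botE {p} : .bot ∈ Sf → NRule Sf fl Γ ⟨[(∅, fl .bot)], p⟩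

theorem IPLDer.app0 {B : IPLBase} {r : IPLRule} (h : r ∈ B)
    (hp : ∀ pr ∈ r.prems, IPLDer B pr.1 pr.2) : IPLDer B ∅ r.concl :=
  .app h fun pr hpr => by rw [Finset.empty_union]; exact hp pr hpr

/-- Lemma (a): over any extension of the simulating base, support of a
subformula coincides with derivability of its flattening. -/
theorem suppIffDer (Sf Γ : Finset IPLForm) (fl : IPLForm → ℕ)
    (hatom : ∀ p, fl (.atom p) = p)
    (hcl : ∀ ξ ∈ Sf, sub ξ ⊆ Sf) :
    ∀ (ξ : IPLForm), ξ ∈ Sf → ∀ C : IPLBase,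
      {r | NRule Sf fl Γ r} ⊆ C → (Supp ξ C ↔ IPLDer C ∅ (fl ξ)) := by
  intro ξ
  induction ξ with
  | atom p =>
    intro _ C _
    rw [hatom]
    exact Iff.rfl
  | and a b iha ihb =>
    intro hmem C hC
    have ha : a ∈ Sf := hcl _ hmem (by simp [sub, IPLsub_self])
    have hb : b ∈ Sf := hcl _ hmem (by simp [sub, IPLsub_self])
    constructor
    · rintro ⟨h1, h2⟩
      refine IPLDer.app0 (hC (NRule.andI hmem)) ?_
      intro pr hpr
      simp only [List.mem_cons, List.not_mem_nil, or_false] at hpr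
      rcases hpr with rfl | rfl
      · exact (iha ha C hC).1 h1
      · exact (ihb hb C hC).1 h2
    · intro h
      constructor
      · refine (iha ha C hC).2 (IPLDer.app0 (hC (NRule.andE1 hmem)) ?_)
        intro pr hpr
        simp only [List.mem_cons, List.not_mem_nil, or_false] at hpr
        rcases hpr with rfl
        exact h
      · refine (ihb hb C hC).2 (IPLDer.app0 (hC (NRule.andE2 hmem)) ?_)
        intro pr hpr
        simp only [List.mem_cons, List.not_mem_nil, or_false] at hpr
        rcases hpr with rfl
        exact h
  | or a b iha ihb =>
    intro hmem C hC
    have ha : a ∈ Sf := hcl _ hmem (by simp [sub, IPLsub_self])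
    have hb : b ∈ Sf := hcl _ hmem (by simp [sub, IPLsub_self])
    constructor
    · intro hs
      refine hs C (subset_refl _) (fl (.or a b)) ?_ ?_
      · intro D hD hsa
        refine IPLDer.app0 (hD (hC (NRule.orI1 hmem))) ?_
        intro pr hpr
        simp only [List.mem_cons, List.not_mem_nil, or_false] at hpr
        rcases hpr with rfl
        exact (iha ha D (hC.trans hD)).1 hsa
      · intro D hD hsb
        refine IPLDer.app0 (hD (hC (NRule.orI2 hmem))) ?_
        intro pr hpr
        simp only [List.mem_cons, List.not_mem_nil, or_false] at hpr
        rcases hpr with rfl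
        exact (ihb hb D (hC.trans hD)).1 hsb
    · intro h D hD p k1 k2
      refine IPLDer.app0 (hD (hC (NRule.orE hmem (a := a) (b := b) (p := p)))) ?_
      intro pr hpr
      simp only [List.mem_cons, List.not_mem_nil, or_false] at hpr
      rcases hpr with rfl | rfl | rfl
      · exact h.monoBase hD
      · have hsa : Supp a (insert ⟨[], fl a⟩ D) :=
          (iha ha _ ((hC.trans hD).trans (Set.subset_insert _ _))).2 IPLDer.axSelf
        have := k1 _ (Set.subset_insert _ _) hsa
        simpa using this.shift
      · have hsb : Supp b (insert ⟨[], fl b⟩ D) :=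
          (ihb hb _ ((hC.trans hD).trans (Set.subset_insert _ _))).2 IPLDer.axSelf
        have := k2 _ (Set.subset_insert _ _) hsb
        simpa using this.shift
  | imp a b iha ihb =>
    intro hmem C hC
    have ha : a ∈ Sf := hcl _ hmem (by simp [sub, IPLsub_self])
    have hb : b ∈ Sf := hcl _ hmem (by simp [sub, IPLsub_self])
    constructor
    · intro hs
      refine IPLDer.app0 (hC (NRule.impI hmem)) ?_
      intro pr hpr
      simp only [List.mem_cons, List.not_mem_nil, or_false] at hpr
      rcases hpr with rfl
      have hsa : Supp a (insert ⟨[], fl a⟩ C) :=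
        (iha ha _ (hC.trans (Set.subset_insert _ _))).2 IPLDer.axSelf
      have hsb := hs _ (Set.subset_insert _ _) hsa
      have := (ihb hb _ (hC.trans (Set.subset_insert _ _))).1 hsb
      simpa using this.shift
    · intro h D hD hsa
      refine (ihb hb D (hC.trans hD)).2 (IPLDer.app0 (hD (hC (NRule.impE hmem))) ?_)
      intro pr hpr
      simp only [List.mem_cons, List.not_mem_nil, or_false] at hpr
      rcases hpr with rfl | rfl
      · exact h.monoBase hD
      · exact (iha ha D (hC.trans hD)).1 hsa
  | bot =>
    intro hmem C hC
    constructor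
    · intro hs
      exact hs (fl .bot)
    · intro h p
      refine IPLDer.app0 (hC (NRule.botE hmem (p := p))) ?_
      intro pr hpr
      simp only [List.mem_cons, List.not_mem_nil, or_false] at hpr
      rcases hpr with rfl
      exact h

/-! ### Lemma (b): derivability in the simulating base yields NJ derivability -/

theorem ctx_eq (S : Finset ℕ) (Γ : Finset IPLForm) (f : ℕ → IPLForm) (x : ℕ) :
    (S ∪ {x}).image f ∪ Γ = insert (f x) (S.image f ∪ Γ) := by
  rw [Finset.image_union, Finset.image_singleton, Finset.insert_eq,
    Finset.union_right_comm, Finset.union_comm]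

theorem derToNJ (Sf Γ : Finset IPLForm) (fl : IPLForm → ℕ) (un : ℕ → IPLForm)
    (hΓ : Γ ⊆ Sf) (hcl : ∀ ξ ∈ Sf, sub ξ ⊆ Sf)
    (hun : ∀ ξ ∈ Sf, un (fl ξ) = ξ) :
    ∀ {S : Finset ℕ} {q : ℕ}, IPLDer {r | NRule Sf fl Γ r} S q →
      NJ (S.image un ∪ Γ) (un q) := by
  intro S q h
  induction h with
  | ref hq => exact NJ.ax (Finset.mem_union_left _ (Finset.mem_image_of_mem _ hq))
  | @app S r hr hp ih =>
    cases hr with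
    | @axΓ γ hγ =>
      rw [hun γ (hΓ hγ)]
      exact NJ.ax (Finset.mem_union_right _ hγ)
    | @andI a b hm =>
      have ha : a ∈ Sf := hcl _ hm (by simp [sub, IPLsub_self])
      have hb : b ∈ Sf := hcl _ hm (by simp [sub, IPLsub_self])
      have h1 := ih (∅, fl a) (by simp)
      have h2 := ih (∅, fl b) (by simp)
      simp only [Finset.union_empty] at h1 h2
      rw [hun a ha] at h1
      rw [hun b hb] at h2
      rw [hun _ hm]
      exact NJ.andI h1 h2
    | @andE1 a b hm =>
      have ha : a ∈ Sf := hcl _ hm (by simp [sub, IPLsub_self])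
      have h1 := ih (∅, fl (.and a b)) (by simp)
      simp only [Finset.union_empty] at h1
      rw [hun _ hm] at h1
      rw [hun a ha]
      exact NJ.andE1 h1
    | @andE2 a b hm =>
      have hb : b ∈ Sf := hcl _ hm (by simp [sub, IPLsub_self])
      have h1 := ih (∅, fl (.and a b)) (by simp)
      simp only [Finset.union_empty] at h1
      rw [hun _ hm] at h1
      rw [hun b hb]
      exact NJ.andE2 h1
    | @orI1 a b hm =>
      have ha : a ∈ Sf := hcl _ hm (by simp [sub, IPLsub_self])
      have h1 := ih (∅, fl a) (by simp)
      simp only [Finset.union_empty] at h1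
      rw [hun a ha] at h1
      rw [hun _ hm]
      exact NJ.orI1 h1
    | @orI2 a b hm =>
      have hb : b ∈ Sf := hcl _ hm (by simp [sub, IPLsub_self])
      have h1 := ih (∅, fl b) (by simp)
      simp only [Finset.union_empty] at h1
      rw [hun b hb] at h1
      rw [hun _ hm]
      exact NJ.orI2 h1
    | @orE a b p hm =>
      have ha : a ∈ Sf := hcl _ hm (by simp [sub, IPLsub_self])
      have hb : b ∈ Sf := hcl _ hm (by simp [sub, IPLsub_self])
      have h0 := ih (∅, fl (.or a b)) (by simp)
      have h1 := ih ({fl a}, p) (by simp)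
      have h2 := ih ({fl b}, p) (by simp)
      simp only [Finset.union_empty] at h0
      rw [hun _ hm] at h0
      rw [ctx_eq, hun a ha] at h1
      rw [ctx_eq, hun b hb] at h2
      exact NJ.orE h0 h1 h2
    | @impI a b hm =>
      have ha : a ∈ Sf := hcl _ hm (by simp [sub, IPLsub_self])
      have hb : b ∈ Sf := hcl _ hm (by simp [sub, IPLsub_self])
      have h1 := ih ({fl a}, fl b) (by simp)
      rw [ctx_eq, hun a ha, hun b hb] at h1
      rw [hun _ hm]
      exact NJ.impI h1
    | @impE a b hm =>
      have ha : a ∈ Sf := hcl _ hm (by simp [sub, IPLsub_self])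
      have hb : b ∈ Sf := hcl _ hm (by simp [sub, IPLsub_self])
      have h0 := ih (∅, fl (.imp a b)) (by simp)
      have h1 := ih (∅, fl a) (by simp)
      simp only [Finset.union_empty] at h0 h1
      rw [hun _ hm] at h0
      rw [hun a ha] at h1
      rw [hun b hb]
      exact NJ.impE h0 h1
    | @botE p hm =>
      have h1 := ih (∅, fl .bot) (by simp)
      simp only [Finset.union_empty] at h1
      rw [hun _ hm] at h1
      exact NJ.botE h1

/-! ### The flattening map and its inverse -/

def flMap (M : ℕ) : IPLForm → ℕ
  | .atom p => p
  | ξ => M + enc ξ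

open Classical in
noncomputable def unflMap (Sf : Finset IPLForm) (M : ℕ) (q : ℕ) : IPLForm :=
  if h : ∃ ξ, ξ ∈ Sf ∧ (∀ p, ξ ≠ .atom p) ∧ flMap M ξ = q then h.choose else .atom q

theorem flMap_compound {M : ℕ} {ξ : IPLForm} (h : ∀ p, ξ ≠ .atom p) :
    flMap M ξ = M + enc ξ := by
  cases ξ with
  | atom p => exact absurd rfl (h p)
  | and a b => rfl
  | or a b => rfl
  | imp a b => rfl
  | bot => rfl

theorem unflMap_flMap {Sf : Finset IPLForm} {M : ℕ}
    (hM : ∀ p, IPLForm.atom p ∈ Sf → p < M) :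
    ∀ ξ ∈ Sf, unflMap Sf M (flMap M ξ) = ξ := by
  intro ξ hξ
  by_cases hat : ∃ p, ξ = .atom p
  · obtain ⟨p, rfl⟩ := hat
    have hq : flMap M (.atom p) = p := rfl
    rw [hq, unflMap, dif_neg]
    rintro ⟨ζ, hζS, hζc, hζq⟩
    rw [flMap_compound hζc] at hζq
    have := hM p hξ
    omega
  · push_neg at hat
    have hex : ∃ ζ, ζ ∈ Sf ∧ (∀ p, ζ ≠ .atom p) ∧ flMap M ζ = flMap M ξ :=
      ⟨ξ, hξ, hat, rfl⟩
    rw [unflMap, dif_pos hex]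
    obtain ⟨hS, hc, hq⟩ := hex.choose_spec
    have hq2 : M + enc hex.choose = M + enc ξ :=
      (flMap_compound hc).symm.trans (hq.trans (flMap_compound hat))
    exact enc_inj _ _ (by omega)

/-! ### Main theorem -/


/-- (Sandqvist's soundness and completeness for IPL) For every finite set
`Γ` of IPL formulas and every IPL formula `φ`: `Γ ⊢ φ` in IPL iff
`Γ ⊩_B φ` holds for every base `B`. -/
theorem ipl_soundness_completeness (Γ : Finset IPLForm) (φ : IPLForm) :
    NJ Γ φ ↔ ∀ B : IPLBase, SuppCtx Γ B φ := by
  constructor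
  · exact fun h => h.sound
  · intro H
    classical
    set Sf : Finset IPLForm := Γ.sup sub ∪ sub φ with hSf
    have hΓSf : Γ ⊆ Sf := by
      intro γ hγ
      exact Finset.mem_union_left _ (Finset.mem_sup.2 ⟨γ, hγ, IPLsub_self γ⟩)
    have hφSf : φ ∈ Sf := Finset.mem_union_right _ (IPLsub_self φ)
    have hcl : ∀ ξ ∈ Sf, sub ξ ⊆ Sf := by
      intro ξ hξ
      rcases Finset.mem_union.1 hξ with h | h
      · obtain ⟨γ, hγ, hmem⟩ := Finset.mem_sup.1 h
        exact (IPLsub_trans hmem).trans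
          ((Finset.le_sup hγ).trans Finset.subset_union_left)
      · exact (IPLsub_trans h).trans Finset.subset_union_right
    set M : ℕ := 1 + Sf.sup (fun ξ => match ξ with | .atom p => p | _ => 0) with hM
    have hMlt : ∀ p, IPLForm.atom p ∈ Sf → p < M := by
      intro p hp
      have := Finset.le_sup (f := fun ξ => match ξ with | .atom p => p | _ => 0) hp
      simp only at this
      omega
    set fl := flMap M with hfl
    set un := unflMap Sf M with hunfl
    have hatom : ∀ p, fl (.atom p) = p := fun p => rfl
    have hun : ∀ ξ ∈ Sf, un (fl ξ) = ξ := unflMap_flMap hMlt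
    set N : IPLBase := {r | NRule Sf fl Γ r} with hN
    have hΓsupp : ∀ ψ ∈ Γ, Supp ψ N := by
      intro ψ hψ
      refine (suppIffDer Sf Γ fl hatom hcl ψ (hΓSf hψ) N (subset_refl _)).2 ?_
      exact IPLDer.app0 (show (⟨[], fl ψ⟩ : IPLRule) ∈ N from NRule.axΓ hψ)
        (fun pr hpr => (List.not_mem_nil hpr).elim)
    have hsφ : Supp φ N := H N N (subset_refl _) hΓsupp
    have hder : IPLDer N ∅ (fl φ) :=
      (suppIffDer Sf Γ fl hatom hcl φ hφSf N (subset_refl _)).1 hsφ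
    have hNJ := derToNJ Sf Γ fl un hΓSf hcl hun hder
    rw [hun φ hφSf] at hNJ
    simpa using hNJ
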